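/- Fix an integer N ≥ 1, σ_w > 0, and m ∈ ℝ with m < −1/2. Define the ReLU transition kernel density for y, z > 0 by k(y, z) = 2^{−N} ∑_{k=1}^N (N choose k) (1/(σ_w² y)) p_{χ²_k}(z/(σ_w² y)), where p_{χ²_k}(t) = t^{k/2−1} e^{−t/2} / (2^{k/2} Γ(k/2)). Then for every z > 0, ∫_0^∞ k(y, z) y^m dy = λ_m z^m, where λ_m = 2^{−(N+m+1)} σ_w^{−2m−2} ∑_{k=1}^N (N choose k) Γ(k/2 − m − 1)/Γ(k/2). That is, the power functions y ↦ y^m on (0, ∞) are eigenfunctions of the layer transition operator T with σ_b = 0, with eigenvalue λ_m. -/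

import Mathlib

open MeasureTheory

/-- The density of the chi-squared distribution with `k` degrees of freedom:
`p_{χ²_k}(t) = t^(k/2−1) e^(−t/2) / (2^(k/2) Γ(k/2))`. -/
noncomputable def chiSqPDF (k : ℕ) (t : ℝ) : ℝ :=
  t ^ ((k : ℝ) / 2 - 1) * Real.exp (-t / 2)
    / ((2 : ℝ) ^ ((k : ℝ) / 2) * Real.Gamma ((k : ℝ) / 2))

/-- The ReLU layer transition kernel density with `σ_b = 0`:
`k(y, z) = 2^{−N} ∑_{k=1}^N (N choose k) (1/(σw² y)) p_{χ²_k}(z/(σw² y))`. -/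
noncomputable def reluKernel (N : ℕ) (σw y z : ℝ) : ℝ :=
  (2 : ℝ)⁻¹ ^ N * ∑ k ∈ Finset.Icc 1 N,
    (N.choose k : ℝ) * (1 / (σw ^ 2 * y)) * chiSqPDF k (z / (σw ^ 2 * y))

/-- `y ↦ y^(−s−1) exp(−b/y)` is integrable on `(0, ∞)` for `s, b > 0`. -/
lemma aux_integrable {s b : ℝ} (hs : 0 < s) (hb : 0 < b) :
    IntegrableOn (fun y : ℝ => y ^ (-s - 1) * Real.exp (-(b * y⁻¹))) (Set.Ioi 0) := by
  have base : IntegrableOn (fun u : ℝ => u ^ (s - 1) * Real.exp (-(b * u))) (Set.Ioi 0) := by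
    have := integrableOn_rpow_mul_exp_neg_mul_rpow (s := s - 1) (p := 1)
      (by linarith) one_pos hb
    refine this.congr_fun (fun x hx => ?_) measurableSet_Ioi
    beta_reduce
    rw [Real.rpow_one, neg_mul]
  have h := (integrableOn_Ioi_comp_rpow_iff
      (fun u : ℝ => u ^ (s - 1) * Real.exp (-(b * u))) (p := (-1:ℝ)) (by norm_num)).mpr base
  refine h.congr_fun (fun x hx => ?_) measurableSet_Ioi
  have hx : (0:ℝ) < x := hx
  simp only [smul_eq_mul, abs_neg, abs_one, one_mul, Real.rpow_neg_one]
  rw [Real.inv_rpow hx.le, ← Real.rpow_neg hx.le, ← mul_assoc, ← Real.rpow_add hx]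
  congr 2
  ring

/-- `∫_0^∞ y^(−s−1) exp(−b/y) dy = b^(−s) Γ(s)` for `s, b > 0`
(substitution `u = 1/y` in the Gamma integral). -/
lemma aux_integral {s b : ℝ} (hs : 0 < s) (hb : 0 < b) :
    ∫ y in Set.Ioi (0:ℝ), y ^ (-s - 1) * Real.exp (-(b * y⁻¹))
      = (1 / b) ^ s * Real.Gamma s := by
  rw [← Real.integral_rpow_mul_exp_neg_mul_Ioi hs hb,
    ← integral_comp_rpow_Ioi (fun u : ℝ => u ^ (s - 1) * Real.exp (-(b * u)))
      (p := (-1:ℝ)) (by norm_num)]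
  refine setIntegral_congr_fun measurableSet_Ioi (fun x hx => ?_)
  have hx : (0:ℝ) < x := hx
  simp only [smul_eq_mul, abs_neg, abs_one, one_mul, Real.rpow_neg_one]
  rw [Real.inv_rpow hx.le, ← Real.rpow_neg hx.le, ← mul_assoc, ← Real.rpow_add hx]
  congr 2
  ring

/-- Pointwise algebraic identity putting one term of the kernel times `y^m`
into the canonical form `C ⬝ y^(−s−1) exp(−b/y)`. -/
lemma pointwise_eq {c z y k2 m : ℝ} (hc : 0 < c) (hz : 0 < z) (hy : 0 < y)
    (hk2 : 0 < k2) :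
    (1 / (c * y)) * ((z / (c * y)) ^ (k2 - 1) * Real.exp (-(z / (c * y)) / 2)
        / ((2:ℝ) ^ k2 * Real.Gamma k2)) * y ^ m
      = (z ^ (k2 - 1) * c ^ (-k2) / ((2:ℝ) ^ k2 * Real.Gamma k2))
          * (y ^ (-(k2 - m - 1) - 1) * Real.exp (-(z / (2 * c) * y⁻¹))) := by
  have hcy : 0 < c * y := by positivity
  have hΓ : (0:ℝ) < Real.Gamma k2 := Real.Gamma_pos_of_pos hk2
  have h2k : (0:ℝ) < (2:ℝ) ^ k2 := Real.rpow_pos_of_pos two_pos _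
  rw [show -(z / (c * y)) / 2 = -(z / (2 * c) * y⁻¹) by
    rw [neg_div, div_div, div_mul_eq_div_div, div_div]; ring_nf]
  rw [Real.div_rpow hz.le hcy.le, Real.mul_rpow hc.le hy.le]
  have hmul : y ^ (k2:ℝ) = y * y ^ (k2 - 1) := by
    have h := Real.rpow_add hy 1 (k2 - 1)
    rw [Real.rpow_one] at h
    rw [← h]; norm_num
  have hyk : y ^ (-(k2 - m - 1) - 1) = y ^ m / y ^ (k2:ℝ) := by
    rw [← Real.rpow_sub hy]; congr 1; ring
  have hck : c ^ (-k2) = 1 / (c * c ^ (k2 - 1)) := by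
    have h := Real.rpow_add hc 1 (k2 - 1)
    rw [Real.rpow_one] at h
    rw [one_div, ← h, ← Real.rpow_neg hc.le]; congr 1; ring
  rw [hyk, hck, hmul]
  have h1 : y ^ (k2 - 1) ≠ 0 := (Real.rpow_pos_of_pos hy _).ne'
  have h2 : c ^ (k2 - 1) ≠ 0 := (Real.rpow_pos_of_pos hc _).ne'
  field_simp

/-- Scalar identity collecting the powers of `2`, `σw` and `z` in each summand. -/
lemma scalar_eq {σw z m : ℝ} (hσw : 0 < σw) (hz : 0 < z) {k2 : ℝ} (hk2 : 0 < k2)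
    (hs : 0 < k2 - m - 1) (N : ℕ) (ch : ℝ) :
    (ch * ((2:ℝ)⁻¹ ^ N * (z ^ (k2 - 1) * (σw ^ 2) ^ (-k2)
        / ((2:ℝ) ^ k2 * Real.Gamma k2))))
      * ((1 / (z / (2 * σw ^ 2))) ^ (k2 - m - 1) * Real.Gamma (k2 - m - 1))
    = (2 : ℝ) ^ (-((N : ℝ) + m + 1)) * σw ^ (-2 * m - 2)
        * (ch * (Real.Gamma (k2 - m - 1) / Real.Gamma k2)) * z ^ m := by
  have hc : (0:ℝ) < σw ^ 2 := by positivity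
  have hΓ : (0:ℝ) < Real.Gamma k2 := Real.Gamma_pos_of_pos hk2
  rw [one_div_div, Real.div_rpow (by positivity) hz.le,
    Real.mul_rpow (by norm_num : (0:ℝ) ≤ 2) hc.le]
  have h2N : (2:ℝ)⁻¹ ^ N = (2:ℝ) ^ (-(N:ℝ)) := by
    rw [inv_pow, ← Real.rpow_natCast 2 N, ← Real.rpow_neg (by norm_num : (0:ℝ) ≤ 2)]
  have hz1 : z ^ (k2 - 1) = z ^ m * z ^ (k2 - m - 1) := by
    rw [← Real.rpow_add hz]; congr 1; ring
  have hσ2 : σw ^ (-2 * m - 2) = (σw ^ 2) ^ (k2 - m - 1) * (σw ^ 2) ^ (-k2) := by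
    rw [← Real.rpow_add hc, ← Real.rpow_natCast σw 2, ← Real.rpow_mul hσw.le]
    congr 1; push_cast; ring
  have h2'' : (2:ℝ) ^ (-((N : ℝ) + m + 1))
      = (2:ℝ) ^ (-(N:ℝ)) * (2:ℝ) ^ (k2 - m - 1) * ((2:ℝ) ^ k2)⁻¹ := by
    rw [← Real.rpow_neg (by norm_num : (0:ℝ) ≤ 2), ← Real.rpow_add two_pos,
      ← Real.rpow_add two_pos]
    congr 1; ring
  rw [h2N, hz1, hσ2, h2'']
  have h1 : (2:ℝ) ^ k2 ≠ 0 := (Real.rpow_pos_of_pos two_pos _).ne'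
  have h2 : z ^ (k2 - m - 1) ≠ 0 := (Real.rpow_pos_of_pos hz _).ne'
  field_simp

/-- For `N ≥ 1`, `σw > 0` and `m < −1/2`, the power functions `y ↦ y^m` are
eigenfunctions of the ReLU layer transition operator with `σ_b = 0`:
for every `z > 0`, `∫_0^∞ k(y, z) y^m dy = λ_m z^m` with
`λ_m = 2^{−(N+m+1)} σw^{−2m−2} ∑_{k=1}^N (N choose k) Γ(k/2−m−1)/Γ(k/2)`. -/
theorem reluKernel_power_eigenfunction
    (N : ℕ) (hN : 1 ≤ N) (σw : ℝ) (hσw : 0 < σw) (m : ℝ) (hm : m < -(1 / 2)) :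
    ∀ z : ℝ, 0 < z →
      ∫ y in Set.Ioi (0 : ℝ), reluKernel N σw y z * y ^ m
        = ((2 : ℝ) ^ (-((N : ℝ) + m + 1)) * σw ^ (-2 * m - 2)
            * ∑ k ∈ Finset.Icc 1 N,
                (N.choose k : ℝ)
                  * (Real.Gamma ((k : ℝ) / 2 - m - 1) / Real.Gamma ((k : ℝ) / 2)))
          * z ^ m := by
  intro z hz
  have hc : (0:ℝ) < σw ^ 2 := by positivity
  have hb : (0:ℝ) < z / (2 * σw ^ 2) := by positivity
  have hk2pos : ∀ k ∈ Finset.Icc 1 N, (0:ℝ) < (k:ℝ) / 2 := by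
    intro k hk
    have hk1 : 1 ≤ k := (Finset.mem_Icc.mp hk).1
    have : (1:ℝ) ≤ (k:ℝ) := by exact_mod_cast hk1
    linarith
  have hspos : ∀ k ∈ Finset.Icc 1 N, (0:ℝ) < (k:ℝ) / 2 - m - 1 := by
    intro k hk
    have hk1 : 1 ≤ k := (Finset.mem_Icc.mp hk).1
    have : (1:ℝ) ≤ (k:ℝ) := by exact_mod_cast hk1
    linarith
  calc
    ∫ y in Set.Ioi (0 : ℝ), reluKernel N σw y z * y ^ m
        = ∫ y in Set.Ioi (0 : ℝ), ∑ k ∈ Finset.Icc 1 N,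
            ((N.choose k : ℝ) * ((2:ℝ)⁻¹ ^ N * (z ^ ((k:ℝ)/2 - 1) * (σw ^ 2) ^ (-((k:ℝ)/2))
                / ((2:ℝ) ^ ((k:ℝ)/2) * Real.Gamma ((k:ℝ)/2)))))
              * (y ^ (-((k:ℝ)/2 - m - 1) - 1) * Real.exp (-(z / (2 * σw ^ 2) * y⁻¹))) := by
      refine setIntegral_congr_fun measurableSet_Ioi (fun y hy => ?_)
      have hy : (0:ℝ) < y := hy
      simp only [reluKernel, chiSqPDF]
      rw [mul_assoc, Finset.sum_mul, Finset.mul_sum]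
      refine Finset.sum_congr rfl (fun k hk => ?_)
      linear_combination ((2:ℝ)⁻¹ ^ N * (N.choose k : ℝ))
        * pointwise_eq hc hz hy (hk2pos k hk) (m := m)
    _ = ∑ k ∈ Finset.Icc 1 N,
          ((N.choose k : ℝ) * ((2:ℝ)⁻¹ ^ N * (z ^ ((k:ℝ)/2 - 1) * (σw ^ 2) ^ (-((k:ℝ)/2))
              / ((2:ℝ) ^ ((k:ℝ)/2) * Real.Gamma ((k:ℝ)/2)))))
            * ∫ y in Set.Ioi (0 : ℝ),
                y ^ (-((k:ℝ)/2 - m - 1) - 1) * Real.exp (-(z / (2 * σw ^ 2) * y⁻¹)) := by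
      rw [integral_finset_sum _ (fun k hk => (aux_integrable (hspos k hk) hb).const_mul _)]
      exact Finset.sum_congr rfl (fun k hk => integral_const_mul _ _)
    _ = ∑ k ∈ Finset.Icc 1 N,
          ((N.choose k : ℝ) * ((2:ℝ)⁻¹ ^ N * (z ^ ((k:ℝ)/2 - 1) * (σw ^ 2) ^ (-((k:ℝ)/2))
              / ((2:ℝ) ^ ((k:ℝ)/2) * Real.Gamma ((k:ℝ)/2)))))
            * ((1 / (z / (2 * σw ^ 2))) ^ ((k:ℝ)/2 - m - 1)
                * Real.Gamma ((k:ℝ)/2 - m - 1)) := by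
      exact Finset.sum_congr rfl (fun k hk => by rw [aux_integral (hspos k hk) hb])
    _ = ((2 : ℝ) ^ (-((N : ℝ) + m + 1)) * σw ^ (-2 * m - 2)
          * ∑ k ∈ Finset.Icc 1 N,
              (N.choose k : ℝ)
                * (Real.Gamma ((k : ℝ) / 2 - m - 1) / Real.Gamma ((k : ℝ) / 2)))
        * z ^ m := by
      rw [Finset.mul_sum, Finset.sum_mul]
      exact Finset.sum_congr rfl
        (fun k hk => scalar_eq hσw hz (hk2pos k hk) (hspos k hk) N _)
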